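/- The function f(w) = (1/σ₁₂)·φ((w−Δ)/σ₁₂)·[Φ((u−w)/(ρσ₁₂)) − Φ((l−w)/(ρσ₁₂))] / [Φ((u−Δ)/σ₁) − Φ((l−Δ)/σ₁)], for fixed constants l < u, σ₁₂ > 0, ρ = σ₁/σ₂ > 0, σ₁ > 0, is a probability density on ℝ, i.e., f is nonnegative and integrates to 1 over ℝ. -/

import Mathlib

open MeasureTheory

noncomputable def phi (t : ℝ) : ℝ := (Real.sqrt (2 * Real.pi))⁻¹ * Real.exp (-(t ^ 2) / 2)

noncomputable def Phi (t : ℝ) : ℝ := ∫ x in Set.Iic t, phi x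

section AuxLemmas

open Real NNReal ProbabilityTheory

lemma phi_eq_gauss {σ : ℝ} (hσ : 0 < σ) (μ x : ℝ) :
    (1 / σ) * phi ((x - μ) / σ) = gaussianPDFReal μ (σ^2).toNNReal x := by
  rw [gaussianPDFReal, phi, Real.coe_toNNReal _ (sq_nonneg σ)]
  have h1 : Real.sqrt (2 * π * σ^2) = Real.sqrt (2 * π) * σ := by
    rw [Real.sqrt_mul (by positivity), Real.sqrt_sq hσ.le]
  rw [h1]
  have h2 : -(((x - μ) / σ) ^ 2) / 2 = -(x - μ)^2 / (2 * σ^2) := by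
    field_simp
  rw [h2, mul_inv]
  ring

lemma phi_integrable : Integrable phi := by
  have h : phi = gaussianPDFReal 0 1 := by
    funext x
    simpa using phi_eq_gauss one_pos 0 x
  rw [h]; exact integrable_gaussianPDFReal 0 1

lemma phi_pos (x : ℝ) : 0 < phi x := by rw [phi]; positivity

lemma phi_continuous : Continuous phi := by unfold phi; fun_prop

lemma Phi_sub_eq (a b : ℝ) : Phi b - Phi a = ∫ x in a..b, phi x :=
  intervalIntegral.integral_Iic_sub_Iic phi_integrable.integrableOn phi_integrable.integrableOn

lemma Phi_mono : Monotone Phi := by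
  intro x y hxy
  exact setIntegral_mono_set phi_integrable.integrableOn
    (ae_of_all _ fun t => (phi_pos t).le)
    (HasSubset.Subset.eventuallyLE (Set.Iic_subset_Iic.mpr hxy))

lemma Phi_measurable : Measurable Phi := Phi_mono.measurable

lemma Phi_sub_substitution {s : ℝ} (hs : 0 < s) (w l u : ℝ) :
    Phi ((u - w) / s) - Phi ((l - w) / s)
      = ∫ v in l..u, gaussianPDFReal w (s^2).toNNReal v := by
  rw [Phi_sub_eq]
  have key : ∀ v, gaussianPDFReal w (s^2).toNNReal v = s⁻¹ * phi ((v - w) / s) := by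
    intro v
    rw [← phi_eq_gauss hs w v, one_div]
  simp_rw [key]
  rw [intervalIntegral.integral_const_mul,
    intervalIntegral.integral_comp_sub_right (fun x => phi (x / s)) w,
    intervalIntegral.integral_comp_div (fun x => phi x) hs.ne',
    smul_eq_mul, ← mul_assoc, inv_mul_cancel₀ hs.ne', one_mul]

lemma gauss_prod (a b : ℝ) (ha : 0 < a) (hb : 0 < b) (Δ v w : ℝ) :
    gaussianPDFReal Δ (a^2).toNNReal w * gaussianPDFReal w (b^2).toNNReal v
    = gaussianPDFReal ((Δ*b^2 + v*a^2)/(a^2+b^2)) (a^2*b^2/(a^2+b^2)).toNNReal w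
      * gaussianPDFReal Δ (a^2+b^2).toNNReal v := by
  have hab : (0:ℝ) < a^2 + b^2 := by positivity
  rw [gaussianPDFReal, gaussianPDFReal, gaussianPDFReal, gaussianPDFReal,
    Real.coe_toNNReal _ (sq_nonneg a), Real.coe_toNNReal _ (sq_nonneg b),
    Real.coe_toNNReal _ (by positivity : (0:ℝ) ≤ a^2*b^2/(a^2+b^2)),
    Real.coe_toNNReal _ hab.le]
  have rear : ∀ (X Y e1 e2 : ℝ), 0 ≤ X → 0 ≤ Y →
      (Real.sqrt X)⁻¹ * Real.exp e1 * ((Real.sqrt Y)⁻¹ * Real.exp e2)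
        = (Real.sqrt (X*Y))⁻¹ * Real.exp (e1 + e2) := by
    intro X Y e1 e2 hX hY
    rw [Real.sqrt_mul hX, mul_inv, Real.exp_add]
    ring
  rw [rear _ _ _ _ (by positivity) (by positivity), rear _ _ _ _ (by positivity) (by positivity)]
  congr 2
  · field_simp
  · field_simp
    ring

lemma gauss_conv_lintegral (a b : ℝ) (ha : 0 < a) (hb : 0 < b) (Δ v : ℝ) :
    ∫⁻ w, ENNReal.ofReal (gaussianPDFReal Δ (a^2).toNNReal w
      * gaussianPDFReal w (b^2).toNNReal v)
    = ENNReal.ofReal (gaussianPDFReal Δ (a^2+b^2).toNNReal v) := by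
  simp_rw [gauss_prod a b ha hb Δ v]
  simp_rw [ENNReal.ofReal_mul (gaussianPDFReal_nonneg _ _ _)]
  rw [lintegral_mul_const' _ _ ENNReal.ofReal_ne_top,
    lintegral_gaussianPDFReal_eq_one _
      (by simpa [Real.toNNReal_eq_zero, not_le] using
        (by positivity : (0:ℝ) < a^2*b^2/(a^2+b^2))),
    one_mul]

lemma gauss_pair_measurable (v : ℝ≥0) :
    Measurable (fun p : ℝ × ℝ => gaussianPDFReal p.1 v p.2) := by
  unfold gaussianPDFReal
  fun_prop

end AuxLemmas

theorem stmt_2 (σ1 σ2 σ12 ρ Δ l u : ℝ) (hσ1 : 0 < σ1) (hσ2 : 0 < σ2)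
    (hσ12 : σ12 = σ1 * σ2 / Real.sqrt (σ1 ^ 2 + σ2 ^ 2))
    (hρ : ρ = σ1 / σ2) (hlu : l < u)
    (f : ℝ → ℝ)
    (hf : ∀ w, f w = (1 / σ12) * phi ((w - Δ) / σ12) *
        (Phi ((u - w) / (ρ * σ12)) - Phi ((l - w) / (ρ * σ12))) /
        (Phi ((u - Δ) / σ1) - Phi ((l - Δ) / σ1))) :
    (∀ w, 0 ≤ f w) ∧ (∫ w, f w) = 1 := by
  have hσ12pos : 0 < σ12 := by
    rw [hσ12]; positivity
  have hρpos : 0 < ρ := by rw [hρ]; positivity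
  have hbpos : 0 < ρ * σ12 := mul_pos hρpos hσ12pos
  have hS : Real.sqrt (σ1^2+σ2^2) ^ 2 = σ1^2 + σ2^2 := Real.sq_sqrt (by positivity)
  have hsum : σ12^2 + (ρ*σ12)^2 = σ1^2 := by
    rw [hσ12, hρ]
    have hSpos : 0 < Real.sqrt (σ1^2+σ2^2) := Real.sqrt_pos.mpr (by positivity)
    field_simp
    nlinarith [hS, sq_nonneg σ1, sq_nonneg σ2]
  set C : ℝ := Phi ((u - Δ) / σ1) - Phi ((l - Δ) / σ1) with hCdef
  set va : NNReal := (σ12^2).toNNReal with hva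
  set vb : NNReal := ((ρ*σ12)^2).toNNReal with hvb
  set K : ℝ → ℝ := fun v => ProbabilityTheory.gaussianPDFReal Δ (σ1^2).toNNReal v with hK
  have hC_eq : C = ∫ v in Set.Ioc l u, K v := by
    rw [hCdef, Phi_sub_substitution hσ1 Δ l u, intervalIntegral.integral_of_le hlu.le]
  have hCpos : 0 < C := by
    rw [hCdef, Phi_sub_eq]
    apply intervalIntegral.intervalIntegral_pos_of_pos_on
    · exact phi_integrable.intervalIntegrable
    · exact fun x _ => phi_pos x
    · exact div_lt_div_of_pos_right (by linarith) hσ1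
  -- the Phi-difference as an integral
  have hD : ∀ w : ℝ, Phi ((u - w) / (ρ * σ12)) - Phi ((l - w) / (ρ * σ12))
      = ∫ v in Set.Ioc l u, ProbabilityTheory.gaussianPDFReal w vb v := by
    intro w
    rw [Phi_sub_substitution hbpos w l u, intervalIntegral.integral_of_le hlu.le]
  have hD_nonneg : ∀ w : ℝ, 0 ≤ Phi ((u - w) / (ρ * σ12)) - Phi ((l - w) / (ρ * σ12)) := by
    intro w
    rw [hD w]
    exact setIntegral_nonneg measurableSet_Ioc
      (fun v _ => ProbabilityTheory.gaussianPDFReal_nonneg _ _ _)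
  have hnonneg : ∀ w, 0 ≤ f w := by
    intro w
    rw [hf w]
    apply div_nonneg _ hCpos.le
    apply mul_nonneg _ (hD_nonneg w)
    exact mul_nonneg (by positivity) (phi_pos _).le
  refine ⟨hnonneg, ?_⟩
  -- rewrite f
  have hf' : ∀ w, f w = C⁻¹ * (ProbabilityTheory.gaussianPDFReal Δ va w *
      ∫ v in Set.Ioc l u, ProbabilityTheory.gaussianPDFReal w vb v) := by
    intro w
    rw [hf w, phi_eq_gauss hσ12pos Δ w, hD w, ← hva, div_eq_mul_inv, mul_comm]
  have hfm : Measurable f := by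
    have : f = fun w => (1 / σ12) * phi ((w - Δ) / σ12) *
        (Phi ((u - w) / (ρ * σ12)) - Phi ((l - w) / (ρ * σ12))) / C := funext hf
    rw [this]
    apply Measurable.div_const
    apply Measurable.mul
    · exact measurable_const.mul (phi_continuous.measurable.comp (by fun_prop))
    · exact (Phi_measurable.comp (by fun_prop)).sub (Phi_measurable.comp (by fun_prop))
  rw [integral_eq_lintegral_of_nonneg_ae (ae_of_all _ hnonneg) hfm.aestronglyMeasurable]
  have key : ∫⁻ w, ENNReal.ofReal (f w) = 1 := by
    have step1 : ∫⁻ w, ENNReal.ofReal (f w)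
        = ENNReal.ofReal C⁻¹ * ∫⁻ w, ENNReal.ofReal (ProbabilityTheory.gaussianPDFReal Δ va w *
            ∫ v in Set.Ioc l u, ProbabilityTheory.gaussianPDFReal w vb v) := by
      simp_rw [hf', ENNReal.ofReal_mul (inv_nonneg.mpr hCpos.le)]
      exact lintegral_const_mul' _ _ ENNReal.ofReal_ne_top
    rw [step1]
    have step2 : ∀ w : ℝ, ENNReal.ofReal (ProbabilityTheory.gaussianPDFReal Δ va w *
          ∫ v in Set.Ioc l u, ProbabilityTheory.gaussianPDFReal w vb v)
        = ∫⁻ v in Set.Ioc l u, ENNReal.ofReal (ProbabilityTheory.gaussianPDFReal Δ va w *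
            ProbabilityTheory.gaussianPDFReal w vb v) := by
      intro w
      rw [← integral_const_mul]
      apply ofReal_integral_eq_lintegral_ofReal
      · exact ((ProbabilityTheory.integrable_gaussianPDFReal w vb).restrict).const_mul _
      · exact ae_of_all _ fun v => mul_nonneg (ProbabilityTheory.gaussianPDFReal_nonneg _ _ _)
          (ProbabilityTheory.gaussianPDFReal_nonneg _ _ _)
    simp_rw [step2]
    have hswap : ∫⁻ w, ∫⁻ v in Set.Ioc l u, ENNReal.ofReal
          (ProbabilityTheory.gaussianPDFReal Δ va w * ProbabilityTheory.gaussianPDFReal w vb v)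
        = ∫⁻ v in Set.Ioc l u, ∫⁻ w, ENNReal.ofReal
          (ProbabilityTheory.gaussianPDFReal Δ va w * ProbabilityTheory.gaussianPDFReal w vb v) := by
      apply lintegral_lintegral_swap
      apply Measurable.aemeasurable
      exact (((ProbabilityTheory.measurable_gaussianPDFReal Δ va).comp measurable_fst).mul
        (gauss_pair_measurable vb)).ennreal_ofReal
    rw [hswap]
    have hconv : ∀ v : ℝ, ∫⁻ w, ENNReal.ofReal
          (ProbabilityTheory.gaussianPDFReal Δ va w * ProbabilityTheory.gaussianPDFReal w vb v)
        = ENNReal.ofReal (K v) := by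
      intro v
      rw [hva, hvb, gauss_conv_lintegral σ12 (ρ*σ12) hσ12pos hbpos Δ v, hsum]
    simp_rw [hconv]
    have step3 : ∫⁻ v in Set.Ioc l u, ENNReal.ofReal (K v) = ENNReal.ofReal C := by
      rw [hC_eq]
      exact (ofReal_integral_eq_lintegral_ofReal
        ((ProbabilityTheory.integrable_gaussianPDFReal Δ _).restrict)
        (ae_of_all _ fun v => ProbabilityTheory.gaussianPDFReal_nonneg _ _ _)).symm
    rw [step3, ← ENNReal.ofReal_mul (inv_nonneg.mpr hCpos.le), inv_mul_cancel₀ hCpos.ne',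
      ENNReal.ofReal_one]
  rw [key]
  simp
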